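/- arXiv:2006.14733 — 5 statements merged into one kernel-verified Lean document; each statement's English description precedes it below -/
import Mathlib

section
/- If a graph G on a finite vertex set can be burned in t rounds by the k-burning process, then the t-th power graph G^t has a dominating set of size at most k·t. -/
/-- The `r`-th power of a graph: distinct vertices are adjacent iff their
distance in `G` is (finite and) at most `r`. -/
def SimpleGraph.power {V : Type*} (G : SimpleGraph V) (r : ℕ) : SimpleGraph V where
  Adj u v := u ≠ v ∧ G.Reachable u v ∧ G.dist u v ≤ r
  symm := ⟨fun u v ⟨h1, h2, h3⟩ => ⟨h1.symm, h2.symm, by rwa [SimpleGraph.dist_comm]⟩⟩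
  loopless := ⟨fun v h => h.1 rfl⟩

/-- `D` is a dominating set of `H`. -/
def SimpleGraph.DomSet {V : Type*} (H : SimpleGraph V) (D : Finset V) : Prop :=
  ∀ v : V, v ∈ D ∨ ∃ u ∈ D, H.Adj u v

/-- `M` is an independent set of `H`. -/
def SimpleGraph.IndepFinset {V : Type*} (H : SimpleGraph V) (M : Finset V) : Prop :=
  ∀ u ∈ M, ∀ v ∈ M, ¬ H.Adj u v

/-- `M` is a maximal independent set of `H`. -/
def SimpleGraph.MaxIndepFinset {V : Type*} (H : SimpleGraph V) (M : Finset V) : Prop :=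
  H.IndepFinset M ∧ ∀ v, v ∉ M → ∃ u ∈ M, H.Adj u v

/-- `G` can be burned within `t` rounds of the `k`-burning process:
there are source sets `s 0, …, s (t-1)` (at most `k` sources per round,
the sources of round `i+1` being `s i`) such that every vertex is within
distance `t - 1 - i` of a source chosen at round `i + 1`. -/
def SimpleGraph.kBurnableIn {V : Type*} (G : SimpleGraph V) (k t : ℕ) : Prop :=
  ∃ s : Fin t → Finset V, (∀ i, (s i).card ≤ k) ∧
    ∀ v : V, ∃ i : Fin t, ∃ u ∈ s i, G.Reachable u v ∧ G.dist u v ≤ t - 1 - i.val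

/-- The `k`-burning number of `G`. -/
noncomputable def SimpleGraph.burningNumber {V : Type*} (G : SimpleGraph V) (k : ℕ) : ℕ :=
  sInf {t | G.kBurnableIn k t}

/-- If `G` can be burned in `t` rounds by the `k`-burning process,
then `G^t` has a dominating set of size at most `k * t`. -/
theorem stmt1 {V : Type*} [Fintype V] [DecidableEq V] (G : SimpleGraph V) (k t : ℕ)
    (h : G.kBurnableIn k t) :
    ∃ D : Finset V, (G.power t).DomSet D ∧ D.card ≤ k * t := by
  obtain ⟨s, hcard, hcov⟩ := h
  refine ⟨Finset.univ.biUnion s, ?_, ?_⟩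
  · intro v
    obtain ⟨i, u, hu, hr, hd⟩ := hcov v
    by_cases huv : u = v
    · left; subst huv; exact Finset.mem_biUnion.2 ⟨i, Finset.mem_univ _, hu⟩
    · right
      exact ⟨u, Finset.mem_biUnion.2 ⟨i, Finset.mem_univ _, hu⟩,
        huv, hr, hd.trans (by omega)⟩
  · calc (Finset.univ.biUnion s).card ≤ ∑ i : Fin t, (s i).card :=
          Finset.card_biUnion_le
      _ ≤ ∑ _i : Fin t, k := Finset.sum_le_sum fun i _ => hcard i
      _ = k * t := by simp [mul_comm]
end

section
/- Let G be a graph on a finite vertex set, and suppose M is a set of vertices of size at most j such that every vertex of G is within distance 2j (in G) of some vertex of M. Then G can be burned in at most 3j rounds by the 1-burning process using the vertices of M (in any order) as the first |M| burning sources. -/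
/-- if `M` has size at most `j` and every vertex is within distance
`2j` of `M`, then `G` can be 1-burned in at most `3j` rounds using `M` as the
initial sources. -/
theorem stmt4 {V : Type*} [Fintype V] [DecidableEq V] (G : SimpleGraph V) (j : ℕ)
    (M : Finset V) (hMcard : M.card ≤ j)
    (hdom : ∀ v : V, ∃ u ∈ M, G.Reachable u v ∧ G.dist u v ≤ 2 * j) :
    G.kBurnableIn 1 (3 * j) := by
  classical
  set l := M.toList with hl
  refine ⟨fun i => if h : i.val < l.length then {l.get ⟨i.val, h⟩} else ∅, ?_, ?_⟩
  · intro i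
    by_cases h : i.val < l.length <;> simp [h]
  · intro v
    obtain ⟨u, huM, hreach, hdist⟩ := hdom v
    have hul : u ∈ l := by simpa [hl] using huM
    have hlen : l.length = M.card := Finset.length_toList M
    set k := l.idxOf u with hk
    have hklt : k < l.length := List.idxOf_lt_length_iff.mpr hul
    have hkj : k < j := lt_of_lt_of_le (hlen ▸ hklt) hMcard
    refine ⟨⟨k, by omega⟩, u, ?_, hreach, ?_⟩
    · simp only [dif_pos hklt]
      have : l.get ⟨k, hklt⟩ = u := List.idxOf_get hklt
      simp [← this]
    · simp only [Fin.val_mk]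
      omega
end

section
/- Let G be a connected graph with burning number b(G) = t, and let M be any maximal independent set in the graph G^{2t} (vertices adjacent iff G-distance at most 2t). Then |M| ≤ t. -/
/-- if `G` is connected with burning number `t`, then any maximal
independent set of `G^{2t}` has size at most `t`. -/
theorem stmt6 {V : Type*} [Fintype V] [DecidableEq V] (G : SimpleGraph V)
    (hconn : G.Connected) (t : ℕ) (ht : G.burningNumber 1 = t)
    (M : Finset V) (hM : (G.power (2 * t)).MaxIndepFinset M) :
    M.card ≤ t := by
  classical
  -- the set of burnable times is nonempty
  have hwit : G.kBurnableIn 1 (Fintype.card V) := by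
    let e : Fin (Fintype.card V) ≃ V := (Fintype.equivFin V).symm
    refine ⟨fun i => {e i}, fun i => by simp, fun v => ?_⟩
    exact ⟨e.symm v, v, Finset.mem_singleton.mpr (e.apply_symm_apply v).symm,
      SimpleGraph.Reachable.refl v, by rw [SimpleGraph.dist_self]; exact Nat.zero_le _⟩
  have hb : G.kBurnableIn 1 t := by
    have := Nat.sInf_mem (s := {t | G.kBurnableIn 1 t}) ⟨_, hwit⟩
    rwa [show sInf {t | G.kBurnableIn 1 t} = t from ht] at this
  obtain ⟨s, hcard, hcov⟩ := hb
  -- assign to each vertex of M a round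
  choose f u hu hre hd using hcov
  have hinj : Set.InjOn f (M : Set V) := by
    intro x hx y hy hxy
    by_contra hne
    -- same round ⇒ same source (card ≤ 1)
    have hcard1 := hcard (f x)
    have hux : u x ∈ s (f x) := hu x
    have huy : u y ∈ s (f x) := hxy ▸ hu y
    have huv : u x = u y := by
      have := Finset.card_le_one.mp hcard1 _ hux _ huy
      exact this
    have hdx : G.dist (u x) x ≤ t - 1 - (f x).val := hd x
    have hdy : G.dist (u x) y ≤ t - 1 - (f x).val := by rw [huv]; exact hxy ▸ hd y
    have htri : G.dist x y ≤ G.dist x (u x) + G.dist (u x) y :=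
      hconn.dist_triangle
    have hdist : G.dist x y ≤ 2 * t := by
      have hcx : G.dist x (u x) = G.dist (u x) x := SimpleGraph.dist_comm
      rw [hcx] at htri
      calc G.dist x y ≤ G.dist (u x) x + G.dist (u x) y := htri
        _ ≤ (t - 1 - (f x).val) + (t - 1 - (f x).val) := Nat.add_le_add hdx hdy
        _ ≤ t + t := Nat.add_le_add (le_trans (Nat.sub_le _ _) (Nat.sub_le _ _))
            (le_trans (Nat.sub_le _ _) (Nat.sub_le _ _))
        _ = 2 * t := (two_mul t).symm
    exact hM.1 x hx y hy ⟨hne, hconn.preconnected x y, hdist⟩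
  calc M.card ≤ (M.image f).card := Finset.card_le_card_of_injOn f
        (fun m hm => Finset.mem_image_of_mem f hm) hinj |>.trans (le_refl _)
    _ ≤ Fintype.card (Fin t) := Finset.card_le_univ _
    _ = t := Fintype.card_fin t
end

section
/- Let G be a graph on n vertices and let j be the smallest positive integer such that some maximal independent set M_{j} of G^{2j} satisfies |M_{j}| ≤ j. Then j ≤ b(G) and burning the vertices of M_j as sources (in any order) burns all of G within |M_j| + 2j ≤ 3j ≤ 3·b(G) rounds. Hence the burning number is 3-approximable by this procedure. -/
/-- Every finite graph has a maximal independent finset. -/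
lemma exists_maxIndepFinset {V : Type*} [Fintype V] [DecidableEq V] (H : SimpleGraph V) :
    ∃ M : Finset V, H.MaxIndepFinset M := by
  classical
  obtain ⟨M, hMmem, hMmax⟩ : ∃ M ∈ Finset.univ.filter (fun M : Finset V => H.IndepFinset M),
      ∀ x ∈ Finset.univ.filter (fun M : Finset V => H.IndepFinset M), ¬ M < x := by
    obtain ⟨M, hM⟩ := Finset.exists_maximal
      (s := Finset.univ.filter (fun M : Finset V => H.IndepFinset M))
      ⟨∅, Finset.mem_filter.mpr ⟨Finset.mem_univ _, by simp [SimpleGraph.IndepFinset]⟩⟩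
    exact ⟨M, hM.1, fun x hx hlt => hlt.not_ge (hM.2 hx hlt.le)⟩
  rw [Finset.mem_filter] at hMmem
  refine ⟨M, hMmem.2, ?_⟩
  intro v hv
  by_contra h
  push_neg at h
  have hind : H.IndepFinset (insert v M) := by
    intro a ha b hb hadj
    rcases Finset.mem_insert.mp ha with ha' | ha' <;>
      rcases Finset.mem_insert.mp hb with hb' | hb'
    · rw [ha', hb'] at hadj; exact H.loopless.irrefl v hadj
    · rw [ha'] at hadj; exact h b hb' hadj.symm
    · rw [hb'] at hadj; exact h a ha' hadj
    · exact hMmem.2 a ha' b hb' hadj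
  exact hMmax (insert v M) (Finset.mem_filter.mpr ⟨Finset.mem_univ _, hind⟩)
    (Finset.lt_iff_ssubset.mpr (Finset.ssubset_insert hv))

/-- If `G` is connected and `1`-burnable in `t` rounds, then any maximal
independent set of `G^{2t}` has at most `t` elements. -/
lemma card_le_of_burnable {V : Type*} [Fintype V] [DecidableEq V] {G : SimpleGraph V}
    (hconn : G.Connected) {t : ℕ} (hb : G.kBurnableIn 1 t)
    {M' : Finset V} (hM' : (G.power (2 * t)).IndepFinset M') : M'.card ≤ t := by
  classical
  obtain ⟨s, hcard, hcov⟩ := hb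
  have key : ∀ v : V, ∃ i : Fin t, ∃ u ∈ s i, G.dist u v ≤ t - 1 - i.val := by
    intro v
    obtain ⟨i, u, hu, _, hd⟩ := hcov v
    exact ⟨i, u, hu, hd⟩
  set f : V → Fin t := fun v => Classical.choose (key v) with hf
  have hfspec : ∀ v : V, ∃ u ∈ s (f v), G.dist u v ≤ t - 1 - (f v).val :=
    fun v => Classical.choose_spec (key v)
  have hinj : Set.InjOn f M' := by
    intro a ha b hb hab
    by_contra hne
    obtain ⟨u₁, hu₁, hd₁⟩ := hfspec a
    obtain ⟨u₂, hu₂, hd₂⟩ := hfspec b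
    rw [hab] at hu₁ hd₁
    have : u₁ = u₂ := Finset.card_le_one.mp (hcard (f b)) u₁ hu₁ u₂ hu₂
    subst this
    have htri : G.dist a b ≤ G.dist a u₁ + G.dist u₁ b := hconn.dist_triangle
    have hcomm : G.dist a u₁ = G.dist u₁ a := SimpleGraph.dist_comm
    have hle : G.dist a b ≤ 2 * t := by omega
    exact hM' a ha b hb ⟨hne, hconn.preconnected a b, hle⟩
  calc M'.card = (M'.image f).card := (Finset.card_image_of_injOn hinj).symm
    _ ≤ Fintype.card (Fin t) := Finset.card_le_univ _
    _ = t := Fintype.card_fin t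

/-- if `j` is the smallest positive integer admitting a maximal
independent set `M` of `G^{2j}` with `|M| ≤ j`, then `j ≤ b(G)` and burning the
vertices of `M` as sources burns `G` within `|M| + 2j ≤ 3j ≤ 3 b(G)` rounds. -/
theorem stmt7 {V : Type*} [Fintype V] [DecidableEq V] (G : SimpleGraph V)
    (hconn : G.Connected) (j : ℕ) (hj : 0 < j)
    (M : Finset V) (hM : (G.power (2 * j)).MaxIndepFinset M) (hMcard : M.card ≤ j)
    (hmin : ∀ j', 0 < j' → j' < j → ∀ M' : Finset V,
      (G.power (2 * j')).MaxIndepFinset M' → j' < M'.card) :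
    j ≤ G.burningNumber 1 ∧ G.kBurnableIn 1 (M.card + 2 * j) ∧
      M.card + 2 * j ≤ 3 * j ∧ 3 * j ≤ 3 * G.burningNumber 1 := by
  classical
  have hVne : Nonempty V := hconn.nonempty
  -- Part 2: burnable in M.card + 2j rounds
  have hburn : G.kBurnableIn 1 (M.card + 2 * j) := by
    set t := M.card + 2 * j with ht
    have hlen : M.toList.length = M.card := Finset.length_toList M
    refine ⟨fun i => if h : i.val < M.card then
      {M.toList.get ⟨i.val, by omega⟩} else ∅, ?_, ?_⟩
    · intro i
      by_cases h : i.val < M.card <;> simp [h]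
    · intro v
      -- find u ∈ M with dist u v ≤ 2j
      obtain ⟨u, hu, hd⟩ : ∃ u ∈ M, G.dist u v ≤ 2 * j := by
        by_cases hv : v ∈ M
        · exact ⟨v, hv, by rw [SimpleGraph.dist_self]; exact Nat.zero_le _⟩
        · obtain ⟨u, hu, _, _, hd⟩ := hM.2 v hv
          exact ⟨u, hu, hd⟩
      obtain ⟨k, hk⟩ := List.mem_iff_get.mp (Finset.mem_toList.mpr hu)
      have hkc : k.val < M.card := by omega
      refine ⟨⟨k.val, by omega⟩, u, ?_, hconn.preconnected u v, ?_⟩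
      · dsimp only
        rw [dif_pos hkc, Finset.mem_singleton, ← hk]
      · show G.dist u v ≤ t - 1 - k.val
        omega
  -- Part 1: j ≤ burning number
  have hlb : ∀ t ∈ {t | G.kBurnableIn 1 t}, j ≤ t := by
    intro t hbt
    by_contra hlt
    push_neg at hlt
    have ht0 : 0 < t := by
      rcases Nat.eq_zero_or_pos t with rfl | h
      · obtain ⟨s, _, hcov⟩ := hbt
        obtain ⟨i, _⟩ := hcov (Classical.arbitrary V)
        exact absurd i.isLt (by omega)
      · exact h
    obtain ⟨M', hM'⟩ := exists_maxIndepFinset (G.power (2 * t))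
    have h1 : t < M'.card := hmin t ht0 hlt M' hM'
    have h2 : M'.card ≤ t := card_le_of_burnable hconn hbt hM'.1
    omega
  have hne : {t | G.kBurnableIn 1 t}.Nonempty := ⟨_, hburn⟩
  have hjb : j ≤ G.burningNumber 1 := le_csInf hne hlb
  exact ⟨hjb, hburn, by omega, by omega⟩
end

section
/- If G is a path on n vertices, then the k-burning number of G is at least ⌈√(n/k)⌉. -/
open SimpleGraph Finset

lemma walk_len_bound {n : ℕ} {u v : Fin n} (w : (pathGraph n).Walk u v) :
    (u.val : ℤ) - v.val ≤ w.length ∧ (v.val : ℤ) - u.val ≤ w.length := by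
  induction w with
  | nil => simp
  | cons h p ih =>
    rw [pathGraph_adj] at h
    simp only [SimpleGraph.Walk.length_cons]
    push_cast
    omega

lemma dist_bound {n : ℕ} {u v : Fin n} (h : (pathGraph n).Reachable u v) :
    (u.val : ℤ) - v.val ≤ (pathGraph n).dist u v ∧
    (v.val : ℤ) - u.val ≤ (pathGraph n).dist u v := by
  obtain ⟨w, hw⟩ := h.exists_walk_length_eq_dist
  rw [← hw]
  exact walk_len_bound w



lemma sum_odd (t : ℕ) : ∑ j ∈ range t, (2*j+1) = t^2 := by
  induction t with
  | zero => simp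
  | succ t ih => rw [Finset.sum_range_succ, ih]; ring

lemma ball_card {n : ℕ} (u : Fin n) (r : ℕ) :
    (univ.filter (fun v : Fin n =>
      (u.val : ℤ) - r ≤ v.val ∧ (v.val : ℤ) ≤ u.val + r)).card ≤ 2*r + 1 := by
  calc (univ.filter (fun v : Fin n =>
      (u.val : ℤ) - r ≤ v.val ∧ (v.val : ℤ) ≤ u.val + r)).card
      ≤ (Finset.Icc (u.val - r) (u.val + r)).card := by
        apply Finset.card_le_card_of_injOn Fin.val
        · intro v hv
          simp only [Finset.mem_coe, mem_filter, mem_univ, true_and] at hv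
          simp only [Finset.mem_coe, Finset.mem_Icc]
          omega
        · exact fun a _ b _ h => Fin.val_injective h
    _ ≤ 2*r + 1 := by rw [Nat.card_Icc]; omega

lemma key {n k t : ℕ} (h : (SimpleGraph.pathGraph n).kBurnableIn k t) :
    n ≤ k * t^2 := by
  obtain ⟨s, hcard, hcov⟩ := h
  have hsub : (univ : Finset (Fin n)) ⊆
      (univ : Finset (Fin t)).biUnion (fun i => (s i).biUnion (fun u =>
        univ.filter (fun v : Fin n =>
          (u.val : ℤ) - (t - 1 - i.val : ℕ) ≤ v.val ∧
          (v.val : ℤ) ≤ u.val + (t - 1 - i.val : ℕ)))) := by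
    intro v _
    obtain ⟨i, u, hu, hreach, hdist⟩ := hcov v
    simp only [Finset.mem_biUnion, mem_univ, true_and, mem_filter]
    refine ⟨i, u, hu, ?_, ?_⟩
    · have := (dist_bound hreach).1
      have h2 : ((SimpleGraph.pathGraph n).dist u v : ℤ) ≤ (t - 1 - i.val : ℕ) := by
        exact_mod_cast hdist
      omega
    · have := (dist_bound hreach).2
      have h2 : ((SimpleGraph.pathGraph n).dist u v : ℤ) ≤ (t - 1 - i.val : ℕ) := by
        exact_mod_cast hdist
      omega
  have hc := Finset.card_le_card hsub
  rw [Finset.card_univ, Fintype.card_fin] at hc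
  calc n ≤ _ := hc
    _ ≤ ∑ i : Fin t, ∑ u ∈ s i, (univ.filter (fun v : Fin n =>
          (u.val : ℤ) - (t - 1 - i.val : ℕ) ≤ v.val ∧
          (v.val : ℤ) ≤ u.val + (t - 1 - i.val : ℕ))).card := by
        refine (Finset.card_biUnion_le).trans ?_
        exact Finset.sum_le_sum fun i _ => Finset.card_biUnion_le
    _ ≤ ∑ i : Fin t, ∑ _u ∈ s i, (2*(t - 1 - i.val) + 1) := by
        refine Finset.sum_le_sum fun i _ => Finset.sum_le_sum fun u _ => ball_card u _
    _ ≤ ∑ i : Fin t, k * (2*(t - 1 - i.val) + 1) := by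
        refine Finset.sum_le_sum fun i _ => ?_
        rw [Finset.sum_const, smul_eq_mul]
        exact Nat.mul_le_mul_right _ (hcard i)
    _ = k * ∑ i : Fin t, (2*(t - 1 - i.val) + 1) := by rw [Finset.mul_sum]
    _ = k * t^2 := by
        congr 1
        rw [Fin.sum_univ_eq_sum_range (fun j => 2*(t - 1 - j) + 1) t]
        rw [← sum_odd t, ← Finset.sum_range_reflect (fun j => 2*j+1) t]

lemma burnable_self (n k : ℕ) (hk : 0 < k) :
    (SimpleGraph.pathGraph n).kBurnableIn k n := by
  exact ⟨fun i => {i}, fun i => by simp; omega,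
    fun v => ⟨v, v, Finset.mem_singleton_self v, SimpleGraph.Reachable.refl v,
      by simp [SimpleGraph.dist_self]⟩⟩

/-- the `k`-burning number of the path on `n` vertices is at
least `⌈√(n/k)⌉`. -/
theorem stmt10 (n k : ℕ) (hk : 0 < k) :
    ⌈Real.sqrt ((n : ℝ) / (k : ℝ))⌉₊ ≤ (SimpleGraph.pathGraph n).burningNumber k := by
  rw [SimpleGraph.burningNumber]
  have hne : {t | (SimpleGraph.pathGraph n).kBurnableIn k t}.Nonempty :=
    ⟨n, burnable_self n k hk⟩
  apply le_csInf hne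
  intro t ht
  have hn : n ≤ k * t^2 := key ht
  rw [Nat.ceil_le]
  have hk' : (0:ℝ) < (k:ℝ) := by exact_mod_cast hk
  have h1 : (n:ℝ) / k ≤ (t:ℝ)^2 := by
    rw [div_le_iff₀ hk']
    calc (n:ℝ) ≤ (k * t^2 : ℕ) := by exact_mod_cast hn
      _ = (t:ℝ)^2 * k := by push_cast; ring
  calc Real.sqrt ((n:ℝ)/k) ≤ Real.sqrt ((t:ℝ)^2) := Real.sqrt_le_sqrt h1
    _ = t := Real.sqrt_sq (by positivity)
end
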